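/- arXiv:1312.2411 — 2 statements merged into one kernel-verified Lean document; each statement's English description precedes it below -/
import Mathlib

section
/- Define M₆ : ℝ⁶ → ℝ⁶ as the composition M ∘ Q restricted via the formula, and let y ∈ ℝ⁶ have nonnegative entries with y₁+y₂+y₃ > 0 and y₄+y₅+y₆ > 0. Set u = (y₁+y₄, y₂+y₅, y₃+y₆) and v = (y₁+y₂+y₃, y₄+y₅+y₆). Then applying T(y) = M(Q(y)) and forming the corresponding sums, one gets T(y)₁+T(y)₄ proportional to 2(y₁+y₄)(y₁+⋯+y₆), T(y)₂+T(y)₅ proportional to 2(y₂+y₅)(y₁+⋯+y₆), and T(y)₃+T(y)₆ proportional to 2(y₃+y₆)(y₁+⋯+y₆); in particular the normalized allele-group marginals (u₁,u₂,u₃)/(u₁+u₂+u₃) are invariant under T. -/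
noncomputable def M : Matrix (Fin 6) (Fin 18) ℝ :=
  !![4,2,0,2,0,0,2,1,0,1,0,0,0,0,0,0,0,0;
     0,2,4,0,0,2,0,1,2,0,0,1,0,0,0,0,0,0;
     0,0,0,2,4,2,0,0,0,1,2,1,0,0,0,0,0,0;
     0,0,0,0,0,0,2,1,0,1,0,0,4,2,0,2,0,0;
     0,0,0,0,0,0,0,1,2,0,0,1,0,2,4,0,0,2;
     0,0,0,0,0,0,0,0,0,1,2,1,0,0,0,2,4,2]

noncomputable def Qmap (y : Fin 6 → ℝ) : Fin 18 → ℝ :=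
  ![y 0 ^ 2, 2 * y 0 * y 1, y 1 ^ 2, 2 * y 0 * y 2, y 2 ^ 2, 2 * y 1 * y 2,
    2 * y 0 * y 3, 2 * y 0 * y 4 + 2 * y 1 * y 3, 2 * y 1 * y 4,
    2 * y 0 * y 5 + 2 * y 2 * y 3, 2 * y 2 * y 5, 2 * y 1 * y 5 + 2 * y 2 * y 4,
    y 3 ^ 2, 2 * y 3 * y 4, y 4 ^ 2, 2 * y 3 * y 5, y 5 ^ 2, 2 * y 4 * y 5]

noncomputable def f (x : Fin 18 → ℝ) : Fin 18 → ℝ := Qmap (M.mulVec x)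


private lemma f6_5 : (5 : Fin 6) = Fin.succ 4 := rfl
private lemma f5_4 : (4 : Fin 5) = Fin.succ 3 := rfl
private lemma f4_3 : (3 : Fin 4) = Fin.succ 2 := rfl
private lemma f3_2 : (2 : Fin 3) = Fin.succ 1 := rfl
private lemma f2_1 : (1 : Fin 2) = Fin.succ 0 := rfl

/-- The blood-group allele marginals y₁+y₄, y₂+y₅, y₃+y₆ are preserved, up to a
common positive scalar, by one generation T = M ∘ Q of the dynamics; in
particular the normalized marginals are invariant. -/
theorem blood_group_marginals_invariant (y : Fin 6 → ℝ) (hy : ∀ i, 0 ≤ y i)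
    (h1 : 0 < y 0 + y 1 + y 2) (h2 : 0 < y 3 + y 4 + y 5) :
    let T := M.mulVec (Qmap y)
    let s := y 0 + y 1 + y 2 + y 3 + y 4 + y 5
    (∃ t : ℝ, 0 < t ∧
        T 0 + T 3 = t * (2 * (y 0 + y 3) * s) ∧
        T 1 + T 4 = t * (2 * (y 1 + y 4) * s) ∧
        T 2 + T 5 = t * (2 * (y 2 + y 5) * s)) ∧
      (T 0 + T 3) / ((T 0 + T 3) + (T 1 + T 4) + (T 2 + T 5)) = (y 0 + y 3) / s ∧
      (T 1 + T 4) / ((T 0 + T 3) + (T 1 + T 4) + (T 2 + T 5)) = (y 1 + y 4) / s ∧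
      (T 2 + T 5) / ((T 0 + T 3) + (T 1 + T 4) + (T 2 + T 5)) = (y 2 + y 5) / s := by
  intro T s
  have hs : 0 < s := by dsimp only [s]; linarith
  have e0 : T 0 + T 3 = 4 * (y 0 + y 3) * s := by
    show M.mulVec (Qmap y) 0 + M.mulVec (Qmap y) 3 = _
    simp only [Matrix.mulVec, dotProduct, Fin.sum_univ_succ, Fin.sum_univ_zero,
      M, Qmap, f6_5, f5_4, f4_3, f3_2, f2_1, Matrix.cons_val_zero, Matrix.cons_val_succ,
      Matrix.of_apply, Matrix.vecHead, Matrix.vecTail, Function.comp, s]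
    norm_num [Matrix.vecHead, Matrix.vecTail]
    simp [Matrix.vecHead, Matrix.vecTail, Fin.succ]
    ring
  have e1 : T 1 + T 4 = 4 * (y 1 + y 4) * s := by
    show M.mulVec (Qmap y) 1 + M.mulVec (Qmap y) 4 = _
    simp only [Matrix.mulVec, dotProduct, Fin.sum_univ_succ, Fin.sum_univ_zero,
      M, Qmap, f6_5, f5_4, f4_3, f3_2, f2_1, Matrix.cons_val_zero, Matrix.cons_val_succ,
      Matrix.of_apply, Matrix.vecHead, Matrix.vecTail, Function.comp, s]
    norm_num [Matrix.vecHead, Matrix.vecTail]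
    simp [Matrix.vecHead, Matrix.vecTail, Fin.succ]
    ring
  have e2 : T 2 + T 5 = 4 * (y 2 + y 5) * s := by
    show M.mulVec (Qmap y) 2 + M.mulVec (Qmap y) 5 = _
    simp only [Matrix.mulVec, dotProduct, Fin.sum_univ_succ, Fin.sum_univ_zero,
      M, Qmap, f6_5, f5_4, f4_3, f3_2, f2_1, Matrix.cons_val_zero, Matrix.cons_val_succ,
      Matrix.of_apply, Matrix.vecHead, Matrix.vecTail, Function.comp, s]
    norm_num [Matrix.vecHead, Matrix.vecTail]
    simp [Matrix.vecHead, Matrix.vecTail, Fin.succ]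
    ring
  have hsum : (T 0 + T 3) + (T 1 + T 4) + (T 2 + T 5) = 4 * s * s := by
    rw [e0, e1, e2]; dsimp only [s]; ring
  refine ⟨⟨2, by norm_num, by rw [e0]; ring, by rw [e1]; ring, by rw [e2]; ring⟩, ?_, ?_, ?_⟩
  · rw [hsum, e0]; field_simp
  · rw [hsum, e1]; field_simp
  · rw [hsum, e2]; field_simp
end

section
/- Let R(x,n) denote the right-hand side of the closed-form evolution formula (the 6-tuple built from M₁(x),…,M₆(x) with coefficients 2^{n-1}) composed with Q. Then R(x,1) is proportional to f(x) for every x ∈ ℝ¹⁸ with nonnegative entries not all zero, where f is the 18-component quadratic system of the paper. -/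
/-- `Qmap` applied to a scalar multiple of a vector. -/
lemma Qmap_mul (S : ℝ) (y : Fin 6 → ℝ) :
    Qmap (fun i => S * y i) = S ^ 2 • Qmap y := by
  funext i
  fin_cases i
  · show (S * y 0) ^ 2 = S ^ 2 * y 0 ^ 2; ring
  · show 2 * (S * y 0) * (S * y 1) = S ^ 2 * (2 * y 0 * y 1); ring
  · show (S * y 1) ^ 2 = S ^ 2 * y 1 ^ 2; ring
  · show 2 * (S * y 0) * (S * y 2) = S ^ 2 * (2 * y 0 * y 2); ring
  · show (S * y 2) ^ 2 = S ^ 2 * y 2 ^ 2; ring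
  · show 2 * (S * y 1) * (S * y 2) = S ^ 2 * (2 * y 1 * y 2); ring
  · show 2 * (S * y 0) * (S * y 3) = S ^ 2 * (2 * y 0 * y 3); ring
  · show 2 * (S * y 0) * (S * y 4) + 2 * (S * y 1) * (S * y 3)
        = S ^ 2 * (2 * y 0 * y 4 + 2 * y 1 * y 3); ring
  · show 2 * (S * y 1) * (S * y 4) = S ^ 2 * (2 * y 1 * y 4); ring
  · show 2 * (S * y 0) * (S * y 5) + 2 * (S * y 2) * (S * y 3)
        = S ^ 2 * (2 * y 0 * y 5 + 2 * y 2 * y 3); ring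
  · show 2 * (S * y 2) * (S * y 5) = S ^ 2 * (2 * y 2 * y 5); ring
  · show 2 * (S * y 1) * (S * y 5) + 2 * (S * y 2) * (S * y 4)
        = S ^ 2 * (2 * y 1 * y 5 + 2 * y 2 * y 4); ring
  · show (S * y 3) ^ 2 = S ^ 2 * y 3 ^ 2; ring
  · show 2 * (S * y 3) * (S * y 4) = S ^ 2 * (2 * y 3 * y 4); ring
  · show (S * y 4) ^ 2 = S ^ 2 * y 4 ^ 2; ring
  · show 2 * (S * y 3) * (S * y 5) = S ^ 2 * (2 * y 3 * y 5); ring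
  · show (S * y 5) ^ 2 = S ^ 2 * y 5 ^ 2; ring
  · show 2 * (S * y 4) * (S * y 5) = S ^ 2 * (2 * y 4 * y 5); ring

lemma col_sum (j : Fin 18) : ∑ i, M i j = 4 := by
  fin_cases j
  · rw [Fin.sum_univ_six]
    show (4:ℝ) + (0:ℝ) + (0:ℝ) + (0:ℝ) + (0:ℝ) + (0:ℝ) = 4
    norm_num
  · rw [Fin.sum_univ_six]
    show (2:ℝ) + (2:ℝ) + (0:ℝ) + (0:ℝ) + (0:ℝ) + (0:ℝ) = 4
    norm_num
  · rw [Fin.sum_univ_six]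
    show (0:ℝ) + (4:ℝ) + (0:ℝ) + (0:ℝ) + (0:ℝ) + (0:ℝ) = 4
    norm_num
  · rw [Fin.sum_univ_six]
    show (2:ℝ) + (0:ℝ) + (2:ℝ) + (0:ℝ) + (0:ℝ) + (0:ℝ) = 4
    norm_num
  · rw [Fin.sum_univ_six]
    show (0:ℝ) + (0:ℝ) + (4:ℝ) + (0:ℝ) + (0:ℝ) + (0:ℝ) = 4
    norm_num
  · rw [Fin.sum_univ_six]
    show (0:ℝ) + (2:ℝ) + (2:ℝ) + (0:ℝ) + (0:ℝ) + (0:ℝ) = 4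
    norm_num
  · rw [Fin.sum_univ_six]
    show (2:ℝ) + (0:ℝ) + (0:ℝ) + (2:ℝ) + (0:ℝ) + (0:ℝ) = 4
    norm_num
  · rw [Fin.sum_univ_six]
    show (1:ℝ) + (1:ℝ) + (0:ℝ) + (1:ℝ) + (1:ℝ) + (0:ℝ) = 4
    norm_num
  · rw [Fin.sum_univ_six]
    show (0:ℝ) + (2:ℝ) + (0:ℝ) + (0:ℝ) + (2:ℝ) + (0:ℝ) = 4
    norm_num
  · rw [Fin.sum_univ_six]
    show (1:ℝ) + (0:ℝ) + (1:ℝ) + (1:ℝ) + (0:ℝ) + (1:ℝ) = 4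
    norm_num
  · rw [Fin.sum_univ_six]
    show (0:ℝ) + (0:ℝ) + (2:ℝ) + (0:ℝ) + (0:ℝ) + (2:ℝ) = 4
    norm_num
  · rw [Fin.sum_univ_six]
    show (0:ℝ) + (1:ℝ) + (1:ℝ) + (0:ℝ) + (1:ℝ) + (1:ℝ) = 4
    norm_num
  · rw [Fin.sum_univ_six]
    show (0:ℝ) + (0:ℝ) + (0:ℝ) + (4:ℝ) + (0:ℝ) + (0:ℝ) = 4
    norm_num
  · rw [Fin.sum_univ_six]
    show (0:ℝ) + (0:ℝ) + (0:ℝ) + (2:ℝ) + (2:ℝ) + (0:ℝ) = 4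
    norm_num
  · rw [Fin.sum_univ_six]
    show (0:ℝ) + (0:ℝ) + (0:ℝ) + (0:ℝ) + (4:ℝ) + (0:ℝ) = 4
    norm_num
  · rw [Fin.sum_univ_six]
    show (0:ℝ) + (0:ℝ) + (0:ℝ) + (2:ℝ) + (0:ℝ) + (2:ℝ) = 4
    norm_num
  · rw [Fin.sum_univ_six]
    show (0:ℝ) + (0:ℝ) + (0:ℝ) + (0:ℝ) + (0:ℝ) + (4:ℝ) = 4
    norm_num
  · rw [Fin.sum_univ_six]
    show (0:ℝ) + (0:ℝ) + (0:ℝ) + (0:ℝ) + (2:ℝ) + (2:ℝ) = 4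
    norm_num

/-- The right-hand side R(x,1) of the closed-form evolution formula is
proportional to f(x). -/
theorem closed_form_at_one (x : Fin 18 → ℝ) (hx : ∀ i, 0 ≤ x i) (hne : x ≠ 0) :
    let M₁ := M.mulVec x 0
    let M₂ := M.mulVec x 1
    let M₃ := M.mulVec x 2
    let M₄ := M.mulVec x 3
    let M₅ := M.mulVec x 4
    let M₆ := M.mulVec x 5
    let z : Fin 6 → ℝ :=
      ![M₁ * (M₅ + M₆) - M₄ * (M₂ + M₃) + (2:ℝ)^(1-1) * (M₁ + M₄) * (M₁ + M₂ + M₃),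
        M₂ * (M₄ + M₆) - M₅ * (M₁ + M₃) + (2:ℝ)^(1-1) * (M₂ + M₅) * (M₁ + M₂ + M₃),
        M₃ * (M₄ + M₅) - M₆ * (M₁ + M₂) + (2:ℝ)^(1-1) * (M₃ + M₆) * (M₁ + M₂ + M₃),
        M₄ * (M₂ + M₃) - M₁ * (M₅ + M₆) + (2:ℝ)^(1-1) * (M₁ + M₄) * (M₄ + M₅ + M₆),
        M₅ * (M₁ + M₃) - M₂ * (M₄ + M₆) + (2:ℝ)^(1-1) * (M₂ + M₅) * (M₄ + M₅ + M₆),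
        M₆ * (M₁ + M₂) - M₃ * (M₄ + M₅) + (2:ℝ)^(1-1) * (M₃ + M₆) * (M₄ + M₅ + M₆)]
    ∃ t : ℝ, 0 < t ∧ Qmap z = t • f x := by
  intro M₁ M₂ M₃ M₄ M₅ M₆ z
  have hz : z = fun i => (M₁ + M₂ + M₃ + M₄ + M₅ + M₆) * M.mulVec x i := by
    funext i
    fin_cases i
    · show M₁ * (M₅ + M₆) - M₄ * (M₂ + M₃) + (2:ℝ)^(1-1) * (M₁ + M₄) * (M₁ + M₂ + M₃)
          = (M₁ + M₂ + M₃ + M₄ + M₅ + M₆) * M₁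
      ring
    · show M₂ * (M₄ + M₆) - M₅ * (M₁ + M₃) + (2:ℝ)^(1-1) * (M₂ + M₅) * (M₁ + M₂ + M₃)
          = (M₁ + M₂ + M₃ + M₄ + M₅ + M₆) * M₂
      ring
    · show M₃ * (M₄ + M₅) - M₆ * (M₁ + M₂) + (2:ℝ)^(1-1) * (M₃ + M₆) * (M₁ + M₂ + M₃)
          = (M₁ + M₂ + M₃ + M₄ + M₅ + M₆) * M₃
      ring
    · show M₄ * (M₂ + M₃) - M₁ * (M₅ + M₆) + (2:ℝ)^(1-1) * (M₁ + M₄) * (M₄ + M₅ + M₆)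
          = (M₁ + M₂ + M₃ + M₄ + M₅ + M₆) * M₄
      ring
    · show M₅ * (M₁ + M₃) - M₂ * (M₄ + M₆) + (2:ℝ)^(1-1) * (M₂ + M₅) * (M₄ + M₅ + M₆)
          = (M₁ + M₂ + M₃ + M₄ + M₅ + M₆) * M₅
      ring
    · show M₆ * (M₁ + M₂) - M₃ * (M₄ + M₅) + (2:ℝ)^(1-1) * (M₃ + M₆) * (M₄ + M₅ + M₆)
          = (M₁ + M₂ + M₃ + M₄ + M₅ + M₆) * M₆
      ring
  have hS4 : M₁ + M₂ + M₃ + M₄ + M₅ + M₆ = 4 * ∑ j, x j := by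
    have h1 : M₁ + M₂ + M₃ + M₄ + M₅ + M₆ = ∑ i, M.mulVec x i :=
      (Fin.sum_univ_six (M.mulVec x)).symm
    rw [h1]
    unfold Matrix.mulVec dotProduct
    rw [Finset.sum_comm, Finset.mul_sum]
    refine Finset.sum_congr rfl fun j _ => ?_
    rw [← Finset.sum_mul, col_sum j]
  have hSpos : 0 < M₁ + M₂ + M₃ + M₄ + M₅ + M₆ := by
    rw [hS4]
    have hj : ∃ j, x j ≠ 0 := by
      by_contra h
      push_neg at h
      exact hne (funext fun j => h j)
    obtain ⟨j, hj⟩ := hj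
    have hjpos : 0 < x j := lt_of_le_of_ne (hx j) (Ne.symm hj)
    have hsum : 0 < ∑ j, x j :=
      Finset.sum_pos' (fun i _ => hx i) ⟨j, Finset.mem_univ j, hjpos⟩
    linarith
  refine ⟨(M₁ + M₂ + M₃ + M₄ + M₅ + M₆) ^ 2, by positivity, ?_⟩
  rw [hz, Qmap_mul]
  rfl
end
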